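/- Let n ≥ 1 be a natural number with n ≠ 2, and let 1 < p < q < p*(n). Then ω_{p,q} < ω_{σ,τ,p,q}. -/

import Mathlib

/-- `σ = n/(p+1) - (n-2)/2`. -/
noncomputable def sigma (n : ℕ) (p : ℝ) : ℝ := n / (p + 1) - ((n : ℝ) - 2) / 2

/-- `τ = n/(q+1) - (n-2)/2`. -/
noncomputable def tau (n : ℕ) (q : ℝ) : ℝ := n / (q + 1) - ((n : ℝ) - 2) / 2

/-- The critical frequency `ω_{p,q}`. -/
noncomputable def omegaPQ (p q : ℝ) : ℝ :=
  (2 * (q - p) / ((p + 1) * (q - 1))) *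
    (((p - 1) * (q + 1)) / ((p + 1) * (q - 1))) ^ ((p - 1) / (q - p))

/-- The critical frequency `ω_{σ,τ,p,q}`. -/
noncomputable def omegaSig (n : ℕ) (p q : ℝ) : ℝ :=
  sigma n p * ((q - p) / (q - 1)) *
    ((sigma n p * (p - 1)) / (tau n q * (q - 1))) ^ ((p - 1) / (q - p))

/-- For `n ≥ 1`, `n ≠ 2`, and `1 < p < q < p*(n)` (the subcriticality condition is
vacuous for `n = 1` where `p*(n) = ∞`), we have `ω_{p,q} < ω_{σ,τ,p,q}`. -/
theorem omegaPQ_lt_omegaSig (p q : ℝ) (n : ℕ) (hn : 1 ≤ n) (hn2 : n ≠ 2)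
    (hp : 1 < p) (hpq : p < q)
    (hq : 3 ≤ n → q < ((n : ℝ) + 2) / ((n : ℝ) - 2)) :
    omegaPQ p q < omegaSig n p q := by
  have hp1 : (0:ℝ) < p - 1 := by linarith
  have hqp : (0:ℝ) < q - p := by linarith
  have hq1 : (0:ℝ) < q - 1 := by linarith
  have hpp : (0:ℝ) < p + 1 := by linarith
  have hqq : (0:ℝ) < q + 1 := by linarith
  have hapos : 0 < (p-1)/(q-p) := div_pos hp1 hqp
  set A : ℝ := ((n:ℝ)+2) - ((n:ℝ)-2)*p with hAd
  set B : ℝ := ((n:ℝ)+2) - ((n:ℝ)-2)*q with hBd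
  have hm : ((n:ℝ) - 2) ≠ 0 := by
    have h2 : (n:ℝ) ≠ 2 := by exact_mod_cast hn2
    intro h; apply h2; linarith
  have hB : 0 < B := by
    rcases (show n = 1 ∨ 3 ≤ n by omega) with h | h
    · subst h; rw [hBd]; push_cast; linarith
    · have h3 : (3:ℝ) ≤ (n:ℝ) := by exact_mod_cast h
      have hq' := hq h
      rw [lt_div_iff₀ (by linarith)] at hq'
      rw [hBd]; nlinarith
  have hA : 0 < A := by
    rcases (show n = 1 ∨ 3 ≤ n by omega) with h | h
    · subst h; rw [hAd]; push_cast; linarith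
    · have h3 : (3:ℝ) ≤ (n:ℝ) := by exact_mod_cast h
      have hBA : B < A := by
        rw [hAd, hBd]; nlinarith [mul_pos (show (0:ℝ) < (n:ℝ)-2 by linarith) hqp]
      linarith
  have hA4 : A ≠ 4 := by
    intro h
    rw [hAd] at h
    have h2 : ((n:ℝ)-2)*(p-1) = 0 := by linear_combination -h
    rcases mul_eq_zero.mp h2 with h3 | h3
    · exact hm h3
    · linarith
  have hAB : A ≠ B := by
    intro h
    rw [hAd, hBd] at h
    have h2 : ((n:ℝ)-2)*(q-p) = 0 := by linear_combination h
    rcases mul_eq_zero.mp h2 with h3 | h3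
    · exact hm h3
    · linarith
  have heq : (A - 4) + ((p-1)/(q-p)) * (A - B) = 0 := by
    rw [hAd, hBd]; field_simp; ring
  -- log inequalities
  have h4A : Real.log 4 - Real.log A < (4 - A)/A := by
    have h1 : Real.log (4/A) < 4/A - 1 := by
      apply Real.log_lt_sub_one_of_pos (by positivity)
      intro hh
      apply hA4
      field_simp at hh
      linarith
    rw [Real.log_div (by norm_num) hA.ne'] at h1
    have e : (4:ℝ)/A - 1 = (4-A)/A := by field_simp
    linarith
  have hBA : Real.log B - Real.log A < (B - A)/A := by
    have h1 : Real.log (B/A) < B/A - 1 := by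
      apply Real.log_lt_sub_one_of_pos (by positivity)
      intro hh
      apply hAB
      field_simp at hh
      linarith
    rw [Real.log_div hB.ne' hA.ne'] at h1
    have e : B/A - 1 = (B-A)/A := by field_simp
    linarith
  have key : 0 < (Real.log A - Real.log 4) + ((p-1)/(q-p)) * (Real.log A - Real.log B) := by
    have e1 : (B-A)/A = -((A-B)/A) := by ring
    have e2 : (4-A)/A = -((A-4)/A) := by ring
    have h2 : ((p-1)/(q-p)) * ((A-B)/A) < ((p-1)/(q-p)) * (Real.log A - Real.log B) :=
      mul_lt_mul_of_pos_left (by linarith) hapos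
    have h3 : (A-4)/A + ((p-1)/(q-p)) * ((A-B)/A) = 0 := by
      rw [← mul_div_assoc, ← add_div, heq, zero_div]
    linarith
  have hABpos : 0 < A/B := div_pos hA hB
  have hgt : 1 < (A/4) * (A/B) ^ ((p-1)/(q-p)) := by
    have hx : 0 < (A/4) * (A/B) ^ ((p-1)/(q-p)) :=
      mul_pos (div_pos hA (by norm_num)) (Real.rpow_pos_of_pos hABpos _)
    have hlog : Real.log ((A/4) * (A/B) ^ ((p-1)/(q-p))) =
        (Real.log A - Real.log 4) + ((p-1)/(q-p)) * (Real.log A - Real.log B) := by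
      rw [Real.log_mul (div_pos hA (by norm_num)).ne' (Real.rpow_pos_of_pos hABpos _).ne',
        Real.log_rpow hABpos,
        Real.log_div hA.ne' (by norm_num : (4:ℝ) ≠ 0),
        Real.log_div hA.ne' hB.ne']
    calc (1:ℝ) = Real.exp 0 := Real.exp_zero.symm
      _ < Real.exp (Real.log ((A/4) * (A/B) ^ ((p-1)/(q-p)))) := by
          apply Real.exp_lt_exp.mpr; rw [hlog]; exact key
      _ = _ := Real.exp_log hx
  -- sigma, tau formulas
  have hσ : sigma n p = A/(2*(p+1)) := by
    unfold sigma; rw [hAd]; field_simp; ring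
  have hτ : tau n q = B/(2*(q+1)) := by
    unfold tau; rw [hBd]; field_simp; ring
  have hK : sigma n p * (p-1) / (tau n q * (q-1)) =
      ((p-1)*(q+1))/((p+1)*(q-1)) * (A/B) := by
    rw [hσ, hτ]; field_simp
  have hC : sigma n p * ((q-p)/(q-1)) = (2*(q-p)/((p+1)*(q-1))) * (A/4) := by
    rw [hσ]; field_simp; ring
  have hω : omegaSig n p q = omegaPQ p q * ((A/4) * (A/B) ^ ((p-1)/(q-p))) := by
    unfold omegaSig omegaPQ
    rw [hK, hC, Real.mul_rpow (le_of_lt (div_pos (mul_pos hp1 hqq) (mul_pos hpp hq1))) hABpos.le]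
    ring
  have hΩ : 0 < omegaPQ p q := by
    unfold omegaPQ
    exact mul_pos (div_pos (by linarith) (mul_pos hpp hq1))
      (Real.rpow_pos_of_pos (div_pos (mul_pos hp1 hqq) (mul_pos hpp hq1)) _)
  rw [hω]
  exact lt_mul_of_one_lt_right hΩ hgt
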